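/- (Reverse comparison; submartingale case.) Fix t > 0 and a bounded measurable f : S → ℝ. Suppose X has transition kernels (κ^X_{s,r}) with respect to (ℱ^X_s) and Y has transition kernels (κ^Y_{s,r}) with respect to (ℱ^Y_s), and X_0 = Y_0 = x₀ P-a.s. for some x₀ ∈ S. Let g(s,x) := ∫ f(y) κ^X_{s,t}(x,dy) for 0 ≤ s ≤ t and assume g is jointly measurable. Assume there exist jointly measurable bounded D, aX, aY : [0,t] × S → ℝ such that for every x ∈ S and every 0 ≤ s ≤ t: (i) the map r ↦ ∫ g(r,y) κ^X_{s,r}(x,dy) has right derivative ∫ (D(r,y) + aX(r,y)) κ^X_{s,r}(x,dy) at every r ∈ [s,t); (ii) the map r ↦ ∫ g(r,y) κ^Y_{s,r}(x,dy) is continuous on [s,t] and has right derivative ∫ (D(r,y) + aY(r,y)) κ^Y_{s,r}(x,dy) at every r ∈ [s,t). If for Lebesgue-a.e. u ∈ [0,t) the inequality aX(u,·) ≤ aY(u,·) holds (P ∘ Y_u⁻¹)-almost surely, then the linking process s ↦ g(s, Y_s), 0 ≤ s ≤ t, is a submartingale with respect to (ℱ^Y_s) and P, and E[f(Y_t)]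 ≥ E[f(X_t)]. -/

import Mathlib

open Set Filter Topology MeasureTheory ProbabilityTheory

/-- `κ` is a family of transition kernels for the process `X` with respect to the
filtration `ℱ` and the measure `μ`. -/
def IsTransitionKernels {S Ω : Type*} [MeasurableSpace S] {mΩ : MeasurableSpace Ω}
    (μ : Measure Ω) (ℱ : Filtration ℝ mΩ) (X : ℝ → Ω → S)
    (κ : ℝ → ℝ → Kernel S S) : Prop :=
  (∀ s : ℝ, 0 ≤ s → ∀ x : S, κ s s x = Measure.dirac x) ∧
  (∀ h : S → ℝ, Measurable h → (∃ C, ∀ z, |h z| ≤ C) →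
    ∀ s r t : ℝ, 0 ≤ s → s ≤ r → r ≤ t → ∀ x : S,
      ∫ y, (∫ z, h z ∂(κ r t y)) ∂(κ s r x) = ∫ z, h z ∂(κ s t x)) ∧
  (∀ h : S → ℝ, Measurable h → (∃ C, ∀ z, |h z| ≤ C) →
    ∀ s t : ℝ, 0 ≤ s → s ≤ t →
      μ[(fun ω => h (X t ω)) | ℱ s] =ᵐ[μ] fun ω => ∫ y, h y ∂(κ s t (X s ω)))

private lemma kint_meas {S : Type*} [MeasurableSpace S] (κ : Kernel S S) [IsSFiniteKernel κ]
    {h : S → ℝ} (hm : Measurable h) : Measurable fun x => ∫ y, h y ∂κ x := by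
  have hsm : StronglyMeasurable (Function.uncurry fun (_ : S) (y : S) => h y) :=
    (hm.comp measurable_snd).stronglyMeasurable
  exact hsm.integral_kernel_prod_right.measurable

private lemma kint_bound {S : Type*} [MeasurableSpace S] (κ : Kernel S S) [IsMarkovKernel κ]
    {h : S → ℝ} {C : ℝ} (hb : ∀ z, |h z| ≤ C) (x : S) : |∫ y, h y ∂κ x| ≤ C := by
  have h1 := norm_integral_le_of_norm_le_const (μ := κ x) (f := h) (C := C)
    (Eventually.of_forall fun y => by simpa [Real.norm_eq_abs] using hb y)
  simpa [Real.norm_eq_abs, measure_univ] using h1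

/-- Reverse comparison, submartingale case (Remark 2.11): if the generator comparison
is reversed, `aX ≤ aY`, then the linking process `s ↦ g(s, Y_s) = T^X_{s,t} f (Y_s)` is a
submartingale on `[0,t]` w.r.t. `(ℱ^Y_s)` and `E[f(Y_t)] ≥ E[f(X_t)]`. -/
theorem reverse_comparison_submartingale
    {S Ω : Type*} [MeasurableSpace S] {mΩ : MeasurableSpace Ω}
    (μ : Measure Ω) [IsProbabilityMeasure μ] (ℱX ℱY : Filtration ℝ mΩ)
    (X Y : ℝ → Ω → S)
    (hXad : ∀ s : ℝ, 0 ≤ s → Measurable[ℱX s] (X s))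
    (hYad : ∀ s : ℝ, 0 ≤ s → Measurable[ℱY s] (Y s))
    (κX κY : ℝ → ℝ → Kernel S S)
    [∀ s r : ℝ, IsMarkovKernel (κX s r)] [∀ s r : ℝ, IsMarkovKernel (κY s r)]
    (hκX : IsTransitionKernels μ ℱX X κX) (hκY : IsTransitionKernels μ ℱY Y κY)
    (t : ℝ) (ht : 0 < t)
    (f : S → ℝ) (hf : Measurable f) (hfb : ∃ C, ∀ z, |f z| ≤ C)
    (x₀ : S) (hx₀ : ∀ᵐ ω ∂μ, X 0 ω = x₀ ∧ Y 0 ω = x₀)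
    (hg : Measurable (Function.uncurry fun s x => ∫ y, f y ∂(κX s t x)))
    (D aX aY : ℝ → S → ℝ)
    (hDm : Measurable (Function.uncurry D)) (hDb : ∃ C, ∀ u z, |D u z| ≤ C)
    (haXm : Measurable (Function.uncurry aX)) (haXb : ∃ C, ∀ u z, |aX u z| ≤ C)
    (haYm : Measurable (Function.uncurry aY)) (haYb : ∃ C, ∀ u z, |aY u z| ≤ C)
    (hgenX : ∀ (x : S) (s : ℝ), 0 ≤ s → s ≤ t → ∀ r : ℝ, s ≤ r → r < t →
      HasDerivWithinAt
        (fun r' => ∫ y, (∫ z, f z ∂(κX r' t y)) ∂(κX s r' x))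
        (∫ y, (D r y + aX r y) ∂(κX s r x)) (Ici r) r)
    (hgenY : ∀ (x : S) (s : ℝ), 0 ≤ s → s ≤ t →
      ContinuousOn (fun r => ∫ y, (∫ z, f z ∂(κX r t y)) ∂(κY s r x)) (Icc s t) ∧
      ∀ r : ℝ, s ≤ r → r < t →
        HasDerivWithinAt
          (fun r' => ∫ y, (∫ z, f z ∂(κX r' t y)) ∂(κY s r' x))
          (∫ y, (D r y + aY r y) ∂(κY s r x)) (Ici r) r)
    (hord : ∀ᵐ u ∂(volume.restrict (Ico (0:ℝ) t)),
      ∀ᵐ x ∂(Measure.map (Y u) μ), aX u x ≤ aY u x) :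
    ((∀ s : ℝ, 0 ≤ s → s ≤ t →
      Integrable (fun ω => ∫ y, f y ∂(κX s t (Y s ω))) μ ∧
      StronglyMeasurable[ℱY s] (fun ω => ∫ y, f y ∂(κX s t (Y s ω)))) ∧
    (∀ s u : ℝ, 0 ≤ s → s ≤ u → u ≤ t →
      (fun ω => ∫ y, f y ∂(κX s t (Y s ω)))
        ≤ᵐ[μ] μ[(fun ω => ∫ y, f y ∂(κX u t (Y u ω))) | ℱY s])) ∧
    ∫ ω, f (X t ω) ∂μ ≤ ∫ ω, f (Y t ω) ∂μ := by
  classical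
  obtain ⟨hκX0, hκXCK, hκXM⟩ := hκX
  obtain ⟨hκY0, hκYCK, hκYM⟩ := hκY
  obtain ⟨Cf, hCf⟩ := hfb
  obtain ⟨CD, hCD⟩ := hDb
  obtain ⟨CX, hCXb⟩ := haXb
  obtain ⟨CY, hCYb⟩ := haYb
  have hCf0 : 0 ≤ Cf := le_trans (abs_nonneg _) (hCf x₀)
  have hCD0 : 0 ≤ CD := le_trans (abs_nonneg _) (hCD 0 x₀)
  have hCY0 : 0 ≤ CY := le_trans (abs_nonneg _) (hCYb 0 x₀)
  have hgm : ∀ s : ℝ, Measurable fun x => ∫ y, f y ∂(κX s t x) := fun s =>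
    hg.comp measurable_prodMk_left
  have hgb : ∀ (s : ℝ) (x : S), |∫ y, f y ∂(κX s t x)| ≤ Cf := fun s x =>
    kint_bound _ hCf x
  -- Step 1: D + aX = 0 on [0, t) × S
  have hDaX : ∀ r : ℝ, 0 ≤ r → r < t → ∀ y : S, D r y + aX r y = 0 := by
    intro r hr0 hrt y
    have hd1 := hgenX y r hr0 hrt.le r le_rfl hrt
    have hconst : (fun _ : ℝ => ∫ z, f z ∂(κX r t y)) =ᶠ[𝓝[Ici r] r]
        fun r' => ∫ y', (∫ z, f z ∂(κX r' t y')) ∂(κX r r' y) := by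
      filter_upwards [eventually_mem_nhdsWithin,
        mem_nhdsWithin_of_mem_nhds (Iio_mem_nhds hrt)] with r' h1 h2
      exact (hκXCK f hf ⟨Cf, hCf⟩ r r' t hr0 h1 (le_of_lt h2) y).symm
    have hd2 : HasDerivWithinAt
        (fun r' => ∫ y', (∫ z, f z ∂(κX r' t y')) ∂(κX r r' y)) 0 (Ici r) r := by
      have h0 : HasDerivWithinAt (fun _ : ℝ => ∫ z, f z ∂(κX r t y)) 0 (Ici r) r :=
        hasDerivWithinAt_const _ _ _
      refine h0.congr_of_eventuallyEq hconst.symm ?_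
      rw [hκX0 r hr0 y, integral_dirac' _ _ (hgm r).stronglyMeasurable]
    have hu : UniqueDiffWithinAt ℝ (Ici r) r :=
      (uniqueDiffOn_Ici r).uniqueDiffWithinAt self_mem_Ici
    have heq0 : ∫ y', (D r y' + aX r y') ∂(κX r r y) = 0 := by
      rw [← hd1.derivWithin hu, hd2.derivWithin hu]
    have hmeas : StronglyMeasurable fun y' => D r y' + aX r y' :=
      ((hDm.comp measurable_prodMk_left).add
        (haXm.comp measurable_prodMk_left)).stronglyMeasurable
    rwa [hκX0 r hr0 y, integral_dirac' _ _ hmeas] at heq0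
  -- Step 2: core submartingale inequality, via kernel representation
  have key : ∀ s u : ℝ, 0 ≤ s → s ≤ u → u ≤ t →
      ∀ᵐ ω ∂μ, (∫ y, f y ∂(κX s t (Y s ω))) ≤
        ∫ y, (∫ z, f z ∂(κX u t y)) ∂(κY s u (Y s ω)) := by
    intro s u hs0 hsu hut
    have hst : s ≤ t := hsu.trans hut
    have hYs : Measurable (Y s) := (hYad s hs0).mono (ℱY.le s) le_rfl
    set π : ℝ → ℝ := fun r => min (max r s) t with hπ
    have hπc : Continuous π := (continuous_id.max continuous_const).min continuous_const
    have hπmem : ∀ r, π r ∈ Icc s t := fun r =>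
      ⟨le_min (le_max_right r s) hst, min_le_right _ _⟩
    have hπeq : ∀ r, s ≤ r → r ≤ t → π r = r := fun r h1 h2 => by
      simp only [hπ]; rw [max_eq_left h1, min_eq_left h2]
    set φ : ℝ → S → ℝ :=
      fun r x => ∫ y, (∫ z, f z ∂(κX (π r) t y)) ∂(κY s (π r) x) with hφ
    have hφcont : ∀ x, Continuous fun r => φ r x := fun x =>
      (hgenY x s hs0 hst).1.comp_continuous hπc hπmem
    have hφmeas : ∀ r, Measurable fun x => φ r x := fun r =>
      kint_meas (κY s (π r)) (hgm (π r))
    have hφunc : Measurable (Function.uncurry φ) :=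
      measurable_uncurry_of_continuous_of_measurable hφcont hφmeas
    have hφderiv : ∀ x r, s ≤ r → r < t →
        HasDerivWithinAt (fun r' => φ r' x)
          (∫ y, (D r y + aY r y) ∂(κY s r x)) (Ici r) r := by
      intro x r hsr hrt
      have h0 := (hgenY x s hs0 hst).2 r hsr hrt
      refine h0.congr_of_eventuallyEq ?_ ?_
      · filter_upwards [eventually_mem_nhdsWithin,
          mem_nhdsWithin_of_mem_nhds (Iio_mem_nhds hrt)] with r' h1 h2
        simp only [hφ]
        rw [hπeq r' (hsr.trans h1) (le_of_lt h2)]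
      · simp only [hφ]
        rw [hπeq r hsr hrt.le]
    set HH : ℝ × S → ℝ := fun p =>
      if s ≤ p.1 ∧ p.1 < t then ∫ y, (D p.1 y + aY p.1 y) ∂(κY s p.1 p.2) else 0 with hHH
    have hHHd : ∀ x r, s ≤ r → r < t →
        HasDerivWithinAt (fun r' => φ r' x) (HH (r, x)) (Ici r) r := by
      intro x r h1 h2
      have he : HH (r, x) = ∫ y, (D r y + aY r y) ∂(κY s r x) := by
        simp only [hHH]; rw [if_pos (⟨h1, h2⟩ : s ≤ r ∧ r < t)]
      rw [he]; exact hφderiv x r h1 h2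
    have hHHb : ∀ p, |HH p| ≤ CD + CY := by
      intro p
      simp only [hHH]
      split_ifs with h
      · exact kint_bound _ (fun z => (abs_add_le _ _).trans (add_le_add (hCD _ z) (hCYb _ z))) _
      · simpa using add_nonneg hCD0 hCY0
    -- joint measurability of HH via right-slopes of φ
    have hσmeas : ∀ n : ℕ, Measurable fun p : ℝ × S =>
        if s ≤ p.1 ∧ p.1 < t then
          (φ (p.1 + (t - p.1) * (2:ℝ)⁻¹ ^ n) p.2 - φ p.1 p.2) / ((t - p.1) * (2:ℝ)⁻¹ ^ n)
        else 0 := by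
      intro n
      have hA : MeasurableSet {p : ℝ × S | s ≤ p.1 ∧ p.1 < t} :=
        ((measurableSet_le measurable_const measurable_fst).inter
          (measurableSet_lt measurable_fst measurable_const))
      have hmap : Measurable fun p : ℝ × S => (p.1 + (t - p.1) * (2:ℝ)⁻¹ ^ n, p.2) :=
        (measurable_fst.add ((measurable_const.sub measurable_fst).mul
          measurable_const)).prodMk measurable_snd
      exact Measurable.ite hA
        (((hφunc.comp hmap).sub
            (hφunc.comp (measurable_fst.prodMk measurable_snd))).div
          ((measurable_const.sub measurable_fst).mul measurable_const))
        measurable_const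
    have hHtend : ∀ p : ℝ × S, Tendsto (fun n : ℕ =>
        if s ≤ p.1 ∧ p.1 < t then
          (φ (p.1 + (t - p.1) * (2:ℝ)⁻¹ ^ n) p.2 - φ p.1 p.2) / ((t - p.1) * (2:ℝ)⁻¹ ^ n)
        else 0) atTop (𝓝 (HH p)) := by
      rintro ⟨r, x⟩
      by_cases h : s ≤ r ∧ r < t
      · obtain ⟨hsr, hrt⟩ := h
        have he : HH (r, x) = ∫ y, (D r y + aY r y) ∂(κY s r x) := by
          simp only [hHH]; rw [if_pos (⟨hsr, hrt⟩ : s ≤ r ∧ r < t)]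
        simp only [if_pos (⟨hsr, hrt⟩ : s ≤ r ∧ r < t), he]
        have hd := hφderiv x r hsr hrt
        rw [hasDerivWithinAt_iff_tendsto_slope] at hd
        have hseq : Tendsto (fun n : ℕ => r + (t - r) * (2:ℝ)⁻¹ ^ n) atTop
            (𝓝[(Ici r) \ {r}] r) := by
          rw [tendsto_nhdsWithin_iff]
          constructor
          · have h2 : Tendsto (fun n : ℕ => (2:ℝ)⁻¹ ^ n) atTop (𝓝 0) :=
              tendsto_pow_atTop_nhds_zero_of_lt_one (by norm_num) (by norm_num)
            have h3 := h2.const_mul (t - r)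
            have h4 := tendsto_const_nhds (x := r) (f := atTop (α := ℕ)) |>.add h3
            simpa using h4
          · refine Eventually.of_forall fun n => ?_
            have hpos : 0 < (t - r) * (2:ℝ)⁻¹ ^ n :=
              mul_pos (sub_pos.2 hrt) (pow_pos (by norm_num) _)
            refine ⟨le_add_of_nonneg_right hpos.le, ?_⟩
            simp only [mem_singleton_iff]
            exact ne_of_gt (lt_add_of_pos_right r hpos)
        have hcomp := hd.comp hseq
        refine hcomp.congr fun n => ?_
        show slope (fun r' => φ r' x) r (r + (t - r) * (2:ℝ)⁻¹ ^ n) = _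
        rw [slope_def_field, add_sub_cancel_left]
      · simp only [if_neg h]
        have he : HH (r, x) = 0 := by simp only [hHH]; rw [if_neg h]
        rw [he]
        exact tendsto_const_nhds
    have hHHm : Measurable HH :=
      measurable_of_tendsto_metrizable hσmeas (tendsto_pi_nhds.2 hHtend)
    -- a.e. (time, sample) nonnegativity of the right derivative
    have hFae : ∀ᵐ r ∂(volume.restrict (Ico (0:ℝ) t)),
        ∀ᵐ ω ∂μ, (s ≤ r → 0 ≤ HH (r, Y s ω)) := by
      filter_upwards [hord, ae_restrict_mem measurableSet_Ico] with r hr hrm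
      by_cases hsr : s ≤ r
      swap
      · exact Eventually.of_forall fun ω h => absurd h hsr
      obtain ⟨hr0, hrt⟩ := hrm
      have hYr : Measurable (Y r) := (hYad r hr0).mono (ℱY.le r) le_rfl
      set B : Set S := {y : S | aY r y < aX r y} with hB
      have hBmeas : MeasurableSet B :=
        measurableSet_lt (haYm.comp measurable_prodMk_left)
          (haXm.comp measurable_prodMk_left)
      have hB0 : μ (Y r ⁻¹' B) = 0 := by
        rw [← Measure.map_apply hYr hBmeas]
        have h0 := ae_iff.mp hr
        simpa [hB, not_le] using h0
      set χ : S → ℝ := B.indicator fun _ => 1 with hχ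
      have hχm : Measurable χ := measurable_const.indicator hBmeas
      have hχb : ∀ z, |χ z| ≤ 1 := by
        intro z; simp only [hχ, indicator_apply]; split_ifs <;> simp
      have hM := hκYM χ hχm ⟨1, hχb⟩ s r hs0 hsr
      have hEχ : ∫ ω, χ (Y r ω) ∂μ = 0 := by
        have hrew : (fun ω => χ (Y r ω))
            = (Y r ⁻¹' B).indicator fun _ => (1:ℝ) := by
          funext ω; simp [hχ, indicator_apply, mem_preimage]
        rw [hrew, integral_indicator_const _ (hYr hBmeas), measureReal_def, hB0]
        simp
      have hEker : ∫ ω, (κY s r (Y s ω) B).toReal ∂μ = 0 := by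
        have h1 : ∫ ω, (μ[(fun ω => χ (Y r ω))|ℱY s]) ω ∂μ = ∫ ω, χ (Y r ω) ∂μ :=
          integral_condExp (ℱY.le s)
        have h2 : ∫ ω, (μ[(fun ω => χ (Y r ω))|ℱY s]) ω ∂μ
            = ∫ ω, (∫ y, χ y ∂(κY s r (Y s ω))) ∂μ := integral_congr_ae hM
        have h3 : ∀ x : S, ∫ y, χ y ∂(κY s r x) = (κY s r x B).toReal := by
          intro x
          rw [hχ, integral_indicator_const _ hBmeas]
          simp [measureReal_def]
        calc ∫ ω, (κY s r (Y s ω) B).toReal ∂μ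
            = ∫ ω, (∫ y, χ y ∂(κY s r (Y s ω))) ∂μ := by simp_rw [h3]
          _ = ∫ ω, χ (Y r ω) ∂μ := by rw [← h2, h1]
          _ = 0 := hEχ
      have hker0 : ∀ᵐ ω ∂μ, κY s r (Y s ω) B = 0 := by
        have hm : Measurable fun ω => (κY s r (Y s ω) B).toReal :=
          (((κY s r).measurable_coe hBmeas).comp hYs).ennreal_toReal
        have hint : Integrable (fun ω => (κY s r (Y s ω) B).toReal) μ := by
          refine ⟨hm.aestronglyMeasurable,
            HasFiniteIntegral.of_bounded (C := 1) (Eventually.of_forall fun ω => ?_)⟩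
          rw [Real.norm_eq_abs, abs_of_nonneg ENNReal.toReal_nonneg]
          have h1 := ENNReal.toReal_mono ENNReal.one_ne_top
            (prob_le_one (μ := κY s r (Y s ω)) (s := B))
          simpa using h1
        have hz := (integral_eq_zero_iff_of_nonneg
          (fun ω => ENNReal.toReal_nonneg) hint).mp hEker
        filter_upwards [hz] with ω hω
        have hω' : (κY s r (Y s ω) B).toReal = 0 := hω
        rw [ENNReal.toReal_eq_zero_iff] at hω'
        rcases hω' with h' | h'
        · exact h'
        · exact absurd h' (measure_ne_top _ _)
      filter_upwards [hker0] with ω hω _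
      have hpos : HH (r, Y s ω) = ∫ y, (D r y + aY r y) ∂(κY s r (Y s ω)) := by
        simp only [hHH]; rw [if_pos (⟨hsr, hrt⟩ : s ≤ r ∧ r < t)]
      rw [hpos]
      refine integral_nonneg_of_ae ?_
      have hae : ∀ᵐ y ∂(κY s r (Y s ω)), y ∉ B := by
        rw [ae_iff]
        simpa using hω
      filter_upwards [hae] with y hy
      have hle : aX r y ≤ aY r y := not_lt.mp (by simpa [hB] using hy)
      have hD := hDaX r hr0 hrt y
      have hgoal : (0:ℝ) ≤ D r y + aY r y := by linarith
      simpa using hgoal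
    -- swap the order of the a.e. quantifiers
    have hswap : ∀ᵐ ω ∂μ, ∀ᵐ r ∂(volume.restrict (Ico (0:ℝ) t)),
        (s ≤ r → 0 ≤ HH (r, Y s ω)) := by
      have hQmeas : MeasurableSet {p : ℝ × Ω | s ≤ p.1 → 0 ≤ HH (p.1, Y s p.2)} := by
        have h1 : MeasurableSet {p : ℝ × Ω | s ≤ p.1} :=
          measurable_fst measurableSet_Ici
        have h2 : Measurable fun p : ℝ × Ω => HH (p.1, Y s p.2) :=
          hHHm.comp (measurable_fst.prodMk (hYs.comp measurable_snd))
        have h3 : MeasurableSet {p : ℝ × Ω | 0 ≤ HH (p.1, Y s p.2)} :=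
          h2 measurableSet_Ici
        have hre : {p : ℝ × Ω | s ≤ p.1 → 0 ≤ HH (p.1, Y s p.2)}
            = {p : ℝ × Ω | s ≤ p.1}ᶜ ∪ {p : ℝ × Ω | 0 ≤ HH (p.1, Y s p.2)} := by
          ext p; simp [imp_iff_not_or]
        rw [hre]; exact h1.compl.union h3
      have hprod1 : ∀ᵐ z ∂((volume.restrict (Ico (0:ℝ) t)).prod μ),
          (s ≤ z.1 → 0 ≤ HH (z.1, Y s z.2)) :=
        (Measure.ae_prod_iff_ae_ae hQmeas).2 hFae
      have h0 := ae_iff.mp hprod1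
      have h1 : (μ.prod (volume.restrict (Ico (0:ℝ) t)))
          (Prod.swap ⁻¹' {p : ℝ × Ω | s ≤ p.1 → 0 ≤ HH (p.1, Y s p.2)}ᶜ) = 0 := by
        rw [← Measure.map_apply measurable_swap hQmeas.compl, Measure.prod_swap]
        exact h0
      have h2 : ∀ᵐ z ∂(μ.prod (volume.restrict (Ico (0:ℝ) t))),
          (s ≤ (Prod.swap z).1 → 0 ≤ HH ((Prod.swap z).1, Y s (Prod.swap z).2)) := by
        rw [ae_iff]
        exact h1
      exact Measure.ae_ae_of_ae_prod h2
    filter_upwards [hswap] with ω hω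
    set x := Y s ω with hx
    have hIcc : ∀ᵐ r ∂(volume.restrict (Icc s u)), 0 ≤ HH (r, x) := by
      have h1 : ∀ᵐ r ∂(volume : Measure ℝ),
          r ∈ Ico (0:ℝ) t → (s ≤ r → 0 ≤ HH (r, x)) :=
        (ae_restrict_iff' measurableSet_Ico).1 hω
      have h2 : ∀ᵐ r ∂(volume : Measure ℝ), r ≠ t := by
        rw [ae_iff]
        have hre : {r : ℝ | ¬ r ≠ t} = {t} := by ext r; simp
        rw [hre]; exact measure_singleton t
      rw [ae_restrict_iff' measurableSet_Icc]
      filter_upwards [h1, h2] with r hr1 hr2 hrm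
      exact hr1 ⟨hs0.trans hrm.1, lt_of_le_of_ne (hrm.2.trans hut) hr2⟩ hrm.1
    have hcont : ContinuousOn (fun r => φ r x) (Icc s u) := (hφcont x).continuousOn
    have hder : ∀ r ∈ Ioo s u, HasDerivWithinAt (fun r' => φ r' x) (HH (r, x)) (Ioi r) r :=
      fun r hr => (hHHd x r hr.1.le (lt_of_lt_of_le hr.2 hut)).mono Ioi_subset_Ici_self
    have hmeasr : Measurable fun r => HH (r, x) :=
      hHHm.comp (measurable_id.prodMk measurable_const)
    have hint : IntervalIntegrable (fun r => HH (r, x)) volume s u := by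
      refine IntervalIntegrable.mono_fun' (g := fun _ => CD + CY) intervalIntegrable_const
        hmeasr.aestronglyMeasurable (Eventually.of_forall fun r => ?_)
      simpa [Real.norm_eq_abs] using hHHb (r, x)
    have hFTC := intervalIntegral.integral_eq_sub_of_hasDeriv_right_of_le hsu hcont hder hint
    have hnn : 0 ≤ ∫ r in s..u, HH (r, x) :=
      intervalIntegral.integral_nonneg_of_ae_restrict hsu hIcc
    have hle : φ s x ≤ φ u x := by linarith
    have hφs : φ s x = ∫ y, f y ∂(κX s t x) := by
      simp only [hφ]
      rw [hπeq s le_rfl hst, hκY0 s hs0 x, integral_dirac' _ _ (hgm s).stronglyMeasurable]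
    have hφu : φ u x = ∫ y, (∫ z, f z ∂(κX u t y)) ∂(κY s u x) := by
      simp only [hφ]
      rw [hπeq u hsu hut]
    rw [← hφs, ← hφu]
    exact hle
  -- first bullet
  have bullet1 : ∀ s : ℝ, 0 ≤ s → s ≤ t →
      Integrable (fun ω => ∫ y, f y ∂(κX s t (Y s ω))) μ ∧
      StronglyMeasurable[ℱY s] (fun ω => ∫ y, f y ∂(κX s t (Y s ω))) := by
    intro s hs0 hst
    have hYs : Measurable[ℱY s] (Y s) := hYad s hs0
    have hmeas : Measurable[ℱY s] fun ω => ∫ y, f y ∂(κX s t (Y s ω)) :=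
      (hgm s).comp hYs
    constructor
    · refine ⟨(hmeas.mono (ℱY.le s) le_rfl).aestronglyMeasurable,
        HasFiniteIntegral.of_bounded (C := Cf) (Eventually.of_forall fun ω => ?_)⟩
      simpa [Real.norm_eq_abs] using hgb s (Y s ω)
    · exact hmeas.stronglyMeasurable
  -- second bullet
  have bullet2 : ∀ s u : ℝ, 0 ≤ s → s ≤ u → u ≤ t →
      (fun ω => ∫ y, f y ∂(κX s t (Y s ω)))
        ≤ᵐ[μ] μ[(fun ω => ∫ y, f y ∂(κX u t (Y u ω))) | ℱY s] := by
    intro s u hs0 hsu hut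
    have hM : μ[(fun ω => ∫ y, f y ∂(κX u t (Y u ω))) | ℱY s]
        =ᵐ[μ] fun ω => ∫ y, (∫ z, f z ∂(κX u t y)) ∂(κY s u (Y s ω)) :=
      hκYM (fun x => ∫ z, f z ∂(κX u t x)) (hgm u) ⟨Cf, fun x => hgb u x⟩ s u hs0 hsu
    filter_upwards [key s u hs0 hsu hut, hM] with ω h1 h2
    rw [h2]
    exact h1
  refine ⟨⟨bullet1, bullet2⟩, ?_⟩
  -- the comparison of expectations
  have hXt : Measurable (X t) := (hXad t ht.le).mono (ℱX.le t) le_rfl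
  have hintX : Integrable (fun ω => f (X t ω)) μ :=
    ⟨(hf.comp hXt).aestronglyMeasurable, HasFiniteIntegral.of_bounded (C := Cf)
      (Eventually.of_forall fun ω => by simpa [Real.norm_eq_abs] using hCf (X t ω))⟩
  have hMX : μ[(fun ω => f (X t ω)) | ℱX 0]
      =ᵐ[μ] fun ω => ∫ y, f y ∂(κX 0 t (X 0 ω)) := hκXM f hf ⟨Cf, hCf⟩ 0 t le_rfl ht.le
  have hEX : ∫ ω, f (X t ω) ∂μ = ∫ y, f y ∂(κX 0 t x₀) := by
    rw [← integral_condExp (ℱX.le 0) (f := fun ω => f (X t ω)), integral_congr_ae hMX]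
    have hconst : ∀ᵐ ω ∂μ, (∫ y, f y ∂(κX 0 t (X 0 ω))) = ∫ y, f y ∂(κX 0 t x₀) :=
      hx₀.mono fun ω h => by rw [h.1]
    rw [integral_congr_ae hconst, integral_const]
    simp [measure_univ]
  have hEY0 : ∫ ω, (∫ y, f y ∂(κX 0 t (Y 0 ω))) ∂μ = ∫ y, f y ∂(κX 0 t x₀) := by
    have hconst : ∀ᵐ ω ∂μ, (∫ y, f y ∂(κX 0 t (Y 0 ω))) = ∫ y, f y ∂(κX 0 t x₀) :=
      hx₀.mono fun ω h => by rw [h.2]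
    rw [integral_congr_ae hconst, integral_const]
    simp [measure_univ]
  have hmono : ∫ ω, (∫ y, f y ∂(κX 0 t (Y 0 ω))) ∂μ
      ≤ ∫ ω, (μ[(fun ω => ∫ y, f y ∂(κX t t (Y t ω))) | ℱY 0]) ω ∂μ :=
    integral_mono_ae (bullet1 0 le_rfl ht.le).1 integrable_condExp
      (bullet2 0 t le_rfl ht.le le_rfl)
  have hcond : ∫ ω, (μ[(fun ω => ∫ y, f y ∂(κX t t (Y t ω))) | ℱY 0]) ω ∂μ
      = ∫ ω, (∫ y, f y ∂(κX t t (Y t ω))) ∂μ := integral_condExp (ℱY.le 0)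
  have hgt : ∀ ω, (∫ y, f y ∂(κX t t (Y t ω))) = f (Y t ω) := fun ω => by
    rw [hκX0 t ht.le, integral_dirac' _ _ hf.stronglyMeasurable]
  calc ∫ ω, f (X t ω) ∂μ = ∫ y, f y ∂(κX 0 t x₀) := hEX
    _ = ∫ ω, (∫ y, f y ∂(κX 0 t (Y 0 ω))) ∂μ := hEY0.symm
    _ ≤ ∫ ω, (μ[(fun ω => ∫ y, f y ∂(κX t t (Y t ω))) | ℱY 0]) ω ∂μ := hmono
    _ = ∫ ω, (∫ y, f y ∂(κX t t (Y t ω))) ∂μ := hcond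
    _ = ∫ ω, f (Y t ω) ∂μ := by
        refine integral_congr_ae (Eventually.of_forall fun ω => hgt ω)
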